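/- Identification of the copula of the unobserved heterogeneity (Lemma 3.3): ℙ-almost surely, 𝔼[D₀·D₁ | σ(P₀,P₁)] = C(P₀,P₁); that is, the conditional probability of joint treatment take-up given the pair of propensity scores is (a version of) the copula of (V₀,V₁) evaluated at the propensity scores. -/

import Mathlib

open MeasureTheory ProbabilityTheory

/-- Identification of the copula of the unobserved heterogeneity (Lemma 3.3):
ℙ-almost surely, `𝔼[D₀·D₁ | σ(P₀,P₁)] = C(P₀,P₁)`. -/
theorem copula_identification
    {Ω 𝒵 𝒰 : Type*} [MeasurableSpace Ω] [MeasurableSpace 𝒵] [MeasurableSpace 𝒰]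
    (μ : Measure Ω) [IsProbabilityMeasure μ]
    (Z : Ω → 𝒵) (U : Ω → 𝒰) (V₀ V₁ : Ω → ℝ)
    (hZ : Measurable Z) (hU : Measurable U)
    (hV₀ : Measurable V₀) (hV₁ : Measurable V₁)
    -- V₀, V₁ uniformly distributed on (0,1)
    (hV₀unif : Measure.map V₀ μ = volume.restrict (Set.Ioo (0:ℝ) 1))
    (hV₁unif : Measure.map V₁ μ = volume.restrict (Set.Ioo (0:ℝ) 1))
    -- measurable threshold functions with values in [0,1]
    (h₀ h₁ : 𝒵 → ℝ) (hh₀ : Measurable h₀) (hh₁ : Measurable h₁)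
    (hh₀mem : ∀ z, h₀ z ∈ Set.Icc (0:ℝ) 1) (hh₁mem : ∀ z, h₁ z ∈ Set.Icc (0:ℝ) 1)
    -- random assignment: Z independent of (V₀, V₁, U)
    (hindep : IndepFun Z (fun ω => (V₀ ω, V₁ ω, U ω)) μ)
    -- binary treatments
    (D₀ D₁ : Ω → ℝ)
    (hD₀ : ∀ ω, D₀ ω = if V₀ ω ≤ h₀ (Z ω) then 1 else 0)
    (hD₁ : ∀ ω, D₁ ω = if V₁ ω ≤ h₁ (Z ω) then 1 else 0)
    -- the copula of (V₀, V₁)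
    (C : ℝ → ℝ → ℝ)
    (hC : ∀ p q, C p q = (μ {ω | V₀ ω ≤ p ∧ V₁ ω ≤ q}).toReal) :
    μ[fun ω => D₀ ω * D₁ ω |
        MeasurableSpace.comap (fun ω => (h₀ (Z ω), h₁ (Z ω))) inferInstance]
      =ᵐ[μ] fun ω => C (h₀ (Z ω)) (h₁ (Z ω)) := by
  classical
  set P : Ω → ℝ × ℝ := fun ω => (h₀ (Z ω), h₁ (Z ω)) with hPdef
  set W : Ω → ℝ × ℝ := fun ω => (V₀ ω, V₁ ω) with hWdef
  have hPm : Measurable P := (hh₀.comp hZ).prodMk (hh₁.comp hZ)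
  have hWm : Measurable W := hV₀.prodMk hV₁
  have hPW : IndepFun P W μ :=
    hindep.comp (hh₀.prodMk hh₁) (measurable_fst.prodMk (measurable_fst.comp measurable_snd))
  have hmap : μ.map (fun ω => (P ω, W ω)) = (μ.map P).prod (μ.map W) :=
    (indepFun_iff_map_prod_eq_prod_map_map hPm.aemeasurable hWm.aemeasurable).mp hPW
  set ν := μ.map P with hνdef
  set η := μ.map W with hηdef
  haveI : IsProbabilityMeasure ν := Measure.isProbabilityMeasure_map hPm.aemeasurable
  haveI : IsProbabilityMeasure η := Measure.isProbabilityMeasure_map hWm.aemeasurable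
  set S : Set ((ℝ × ℝ) × ℝ × ℝ) := {x | x.2.1 ≤ x.1.1 ∧ x.2.2 ≤ x.1.2} with hSdef
  have hSm : MeasurableSet S := by
    rw [hSdef, Set.setOf_and]
    exact (measurableSet_le (measurable_fst.comp measurable_snd)
        (measurable_fst.comp measurable_fst)).inter
      (measurableSet_le (measurable_snd.comp measurable_snd)
        (measurable_snd.comp measurable_fst))
  set A := (fun ω => (P ω, W ω)) ⁻¹' S with hAdef
  have hA : MeasurableSet A := (hPm.prodMk hWm) hSm
  have hf_eq : (fun ω => D₀ ω * D₁ ω) = A.indicator (fun _ => (1:ℝ)) := by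
    funext ω
    simp only [hD₀, hD₁, hAdef, Set.indicator_apply, Set.mem_preimage, hSdef,
      Set.mem_setOf_eq]
    by_cases h0 : V₀ ω ≤ h₀ (Z ω) <;> by_cases h1 : V₁ ω ≤ h₁ (Z ω) <;> simp [h0, h1, hPdef, hWdef]
  set G : ℝ × ℝ → ℝ := fun x => (η (Prod.mk x ⁻¹' S)).toReal with hGdef
  have hGm0 : Measurable fun x => η (Prod.mk x ⁻¹' S) := measurable_measure_prodMk_left hSm
  have hGm : Measurable G := hGm0.ennreal_toReal
  have hg_eq : (fun ω => C (h₀ (Z ω)) (h₁ (Z ω))) = fun ω => G (P ω) := by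
    funext ω
    rw [hC, hGdef]
    congr 1
    rw [hηdef, Measure.map_apply hWm (measurable_prodMk_left hSm)]
    rfl
  -- key set-integral equality
  have key : ∀ B : Set (ℝ × ℝ), MeasurableSet B →
      ∫ ω in P ⁻¹' B, G (P ω) ∂μ
        = ∫ ω in P ⁻¹' B, A.indicator (fun _ => (1:ℝ)) ω ∂μ := by
    intro B hB
    have hmeas : MeasurableSet ((B ×ˢ (Set.univ : Set (ℝ × ℝ))) ∩ S) :=
      (hB.prod MeasurableSet.univ).inter hSm
    have h1 : ∫ ω in P ⁻¹' B, G (P ω) ∂μ = ∫ x in B, G x ∂ν :=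
      (setIntegral_map hB hGm.aestronglyMeasurable hPm.aemeasurable).symm
    have h2 : ∫ x in B, G x ∂ν = (∫⁻ x in B, η (Prod.mk x ⁻¹' S) ∂ν).toReal :=
      integral_toReal hGm0.aemeasurable (ae_of_all _ fun x => measure_lt_top η _)
    have h3 : ∫⁻ x in B, η (Prod.mk x ⁻¹' S) ∂ν
        = (ν.prod η) ((B ×ˢ (Set.univ : Set (ℝ × ℝ))) ∩ S) := by
      rw [Measure.prod_apply hmeas, ← lintegral_indicator hB]
      congr 1
      funext x
      by_cases hx : x ∈ B
      · have hpre : Prod.mk x ⁻¹' ((B ×ˢ (Set.univ : Set (ℝ × ℝ))) ∩ S)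
            = Prod.mk x ⁻¹' S := by
          ext w; simp [hx]
        rw [Set.indicator_of_mem hx, hpre]
      · have hpre : Prod.mk x ⁻¹' ((B ×ˢ (Set.univ : Set (ℝ × ℝ))) ∩ S) = ∅ := by
          ext w; simp [hx]
        rw [Set.indicator_of_notMem hx, hpre, measure_empty]
    have h4 : (ν.prod η) ((B ×ˢ (Set.univ : Set (ℝ × ℝ))) ∩ S) = μ (A ∩ P ⁻¹' B) := by
      rw [← hmap, Measure.map_apply (hPm.prodMk hWm) hmeas]
      congr 1
      ext ω
      simp only [hAdef, Set.mem_preimage, Set.mem_inter_iff, Set.mem_prod, Set.mem_univ,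
        and_true]
      tauto
    have h5 : ∫ ω in P ⁻¹' B, A.indicator (fun _ => (1:ℝ)) ω ∂μ
        = (μ (A ∩ P ⁻¹' B)).toReal := by
      rw [integral_indicator hA, setIntegral_const, measureReal_restrict_apply hA, measureReal_def,
        smul_eq_mul, mul_one]
    rw [h1, h2, h3, h4, h5]
  -- assemble via uniqueness of conditional expectation
  have hm : MeasurableSpace.comap P inferInstance ≤ ‹MeasurableSpace Ω› := hPm.comap_le
  haveI : SigmaFinite (μ.trim hm) := inferInstance
  have hf_int : Integrable (A.indicator (fun _ => (1:ℝ))) μ :=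
    (integrable_const (1:ℝ)).indicator hA
  have hPm' : @Measurable Ω (ℝ × ℝ) (MeasurableSpace.comap P inferInstance) _ P :=
    fun s hs => ⟨s, hs, rfl⟩
  have hg_sm : @StronglyMeasurable Ω ℝ _ (MeasurableSpace.comap P inferInstance)
      (fun ω => G (P ω)) := (hGm.comp hPm').stronglyMeasurable
  have hg_int : Integrable (fun ω => G (P ω)) μ := by
    refine (integrable_const (1:ℝ)).mono' (hGm.comp hPm).aestronglyMeasurable
      (ae_of_all _ fun ω => ?_)
    rw [Real.norm_eq_abs, abs_of_nonneg ENNReal.toReal_nonneg]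
    calc (η (Prod.mk (P ω) ⁻¹' S)).toReal ≤ (1 : ENNReal).toReal :=
          ENNReal.toReal_mono ENNReal.one_ne_top prob_le_one
      _ = 1 := ENNReal.toReal_one
  rw [hf_eq, hg_eq]
  refine (ae_eq_condExp_of_forall_setIntegral_eq hm hf_int
    (fun s _ _ => hg_int.integrableOn) ?_ hg_sm.aestronglyMeasurable).symm
  intro s hs _
  obtain ⟨B, hB, rfl⟩ := hs
  exact key B hB
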